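/- The operators on the r-colored fermionic Fock space 𝓕^r satisfy the full Cl^r anti-commutation relations: for all colors i, j ∈ Fin r and all integers k, l, one has ψ_i(k)ψ_j(l) + ψ_j(l)ψ_i(k) = 0, ψ*_i(k)ψ*_j(l) + ψ*_j(l)ψ*_i(k) = 0, and ψ_i(k)ψ*_j(l) + ψ*_j(l)ψ_i(k) = δ_{i,j}·δ_{k,l}·id. -/

import Mathlib

open scoped Classical

/-- A semi-infinite monomial: a strictly decreasing sequence `i : ℕ → ℤ`
(written `i₀ > i₁ > i₂ > ⋯`) such that `i n = m - n` for all sufficiently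
large `n`, for some integer `m` (the charge). -/
structure SIM : Type where
  seq : ℕ → ℤ
  strictAnti : StrictAnti seq
  charge_exists : ∃ m : ℤ, ∃ N : ℕ, ∀ n ≥ N, seq n = m - n

namespace SIM

/-- `v` has charge `m` if `v n = m - n` for all sufficiently large `n`. -/
def HasCharge (v : SIM) (m : ℤ) : Prop :=
  ∃ N : ℕ, ∀ n ≥ N, v.seq n = m - n

/-- The charge of a semi-infinite monomial. -/
noncomputable def charge (v : SIM) : ℤ := v.charge_exists.choose

theorem exists_seq_lt (v : SIM) (k : ℤ) : ∃ n, v.seq n < k := by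
  obtain ⟨m, N, hN⟩ := v.charge_exists
  refine ⟨max N (m - k + 1).toNat, ?_⟩
  rw [hN _ (le_max_left _ _)]
  have h1 : (m - k + 1).toNat ≤ max N (m - k + 1).toNat := le_max_right _ _
  omega

/-- The position at which `k` is inserted into `v`: the number of entries of `v`
that are greater than `k` (assuming `k` does not occur in `v`). -/
noncomputable def insIdx (v : SIM) (k : ℤ) : ℕ := sInf {n : ℕ | v.seq n < k}

/-- The monomial obtained from `v` by inserting the entry `k`
(meaningful when `k` does not occur among the entries of `v`; in the unused
case where `k` does occur we simply return `v`). -/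
noncomputable def insert (v : SIM) (k : ℤ) : SIM :=
  if h : k ∈ Set.range v.seq then v
  else
    { seq := fun n =>
        if n < v.insIdx k then v.seq n else if n = v.insIdx k then k else v.seq (n - 1)
      strictAnti := by
        have hs : v.seq (v.insIdx k) < k := Nat.sInf_mem (v.exists_seq_lt k)
        have hgt : ∀ n, n < v.insIdx k → k < v.seq n := by
          intro n hn
          have h1 : ¬ v.seq n < k := Nat.notMem_of_lt_sInf hn
          have h2 : v.seq n ≠ k := fun hh => h ⟨n, hh⟩
          omega
        apply strictAnti_nat_of_succ_lt
        intro n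

        rcases lt_trichotomy (n + 1) (v.insIdx k) with h1 | h1 | h1
        · rw [if_pos h1, if_pos (by omega)]
          exact v.strictAnti (Nat.lt_succ_self n)
        · rw [if_neg (by omega), if_pos h1, if_pos (by omega)]
          exact hgt n (by omega)
        · rw [if_neg (by omega), if_neg (by omega)]
          rcases eq_or_lt_of_le (Nat.le_of_lt_succ h1) with h2 | h2
          · rw [if_neg (by omega), if_pos h2.symm]
            simpa [← h2] using hs
          · rw [if_neg (by omega), if_neg (by omega)]
            exact v.strictAnti (by omega)
      charge_exists := by
        obtain ⟨m, N, hN⟩ := v.charge_exists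
        refine ⟨m + 1, max N (v.insIdx k) + 1, fun n hn => ?_⟩

        beta_reduce
        rw [if_neg (by omega), if_neg (by omega), hN (n - 1) (by omega)]
        omega }

/-- The position of the entry `k` in `v` (assuming `k` occurs in `v`). -/
noncomputable def delIdx (v : SIM) (k : ℤ) : ℕ := sInf {n : ℕ | v.seq n ≤ k}

/-- The monomial obtained from `v` by deleting the entry `k`
(meaningful when `k` occurs among the entries of `v`). -/
noncomputable def delete (v : SIM) (k : ℤ) : SIM where
  seq n := if n < v.delIdx k then v.seq n else v.seq (n + 1)
  strictAnti := by
    apply strictAnti_nat_of_succ_lt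
    intro n

    split_ifs <;> exact v.strictAnti (by omega)
  charge_exists := by
    obtain ⟨m, N, hN⟩ := v.charge_exists
    refine ⟨m - 1, max N (v.delIdx k), fun n hn => ?_⟩

    beta_reduce
    rw [if_neg (by omega), hN (n + 1) (by omega)]
    omega

end SIM

/-- The fermionic Fock space: the free ℂ-vector space on the set of all
semi-infinite monomials (of all charges). -/
abbrev Fock : Type := SIM →₀ ℂ

/-- The wedging operator `ψ(k)`: it sends a basis monomial `i₀ > i₁ > ⋯` to `0`
if `k = i_s` for some `s`, and otherwise to `(−1)^s` times the basis monomial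
obtained by inserting `k`, where `s` is the number of entries greater
than `k`. -/
noncomputable def psi (k : ℤ) : Fock →ₗ[ℂ] Fock :=
  Finsupp.lsum ℂ fun v =>
    if k ∈ Set.range v.seq then 0
    else ((-1 : ℂ) ^ v.insIdx k) • Finsupp.lsingle (v.insert k)

/-- The contracting operator `ψ*(k)`: it sends a basis monomial `i₀ > i₁ > ⋯`
to `(−1)^s` times the basis monomial obtained by deleting `i_s` if `k = i_s`,
and to `0` if `k` does not occur among the entries. -/
noncomputable def psiStar (k : ℤ) : Fock →ₗ[ℂ] Fock :=
  Finsupp.lsum ℂ fun v =>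
    if k ∈ Set.range v.seq then ((-1 : ℂ) ^ v.delIdx k) • Finsupp.lsingle (v.delete k)
    else 0

/-- The `r`-colored fermionic Fock space `𝓕^r`: the free ℂ-vector space on the
set of `r`-tuples of semi-infinite monomials. -/
abbrev FockR (r : ℕ) : Type := (Fin r → SIM) →₀ ℂ

/-- The colored wedging operator `ψ_i(k)` on `𝓕^r`: it applies `ψ(k)` to the
`i`-th component of a basis tuple and multiplies by the sign
`(−1)^{c₀ + ⋯ + c_{i−1}}`, where `c_j` is the charge of the `j`-th
component. -/
noncomputable def psiC (r : ℕ) (i : Fin r) (k : ℤ) : FockR r →ₗ[ℂ] FockR r :=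
  Finsupp.lsum ℂ fun w =>
    if k ∈ Set.range (w i).seq then 0
    else ((-1 : ℂ) ^ (∑ j ∈ Finset.Iio i, (w j).charge)) •
      ((-1 : ℂ) ^ (w i).insIdx k) •
        Finsupp.lsingle (Function.update w i ((w i).insert k))

/-- The colored contracting operator `ψ*_i(k)` on `𝓕^r`: it applies `ψ*(k)` to
the `i`-th component of a basis tuple and multiplies by the sign
`(−1)^{c₀ + ⋯ + c_{i−1}}`, where `c_j` is the charge of the `j`-th
component. -/
noncomputable def psiStarC (r : ℕ) (i : Fin r) (k : ℤ) : FockR r →ₗ[ℂ] FockR r :=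
  Finsupp.lsum ℂ fun w =>
    if k ∈ Set.range (w i).seq then
      ((-1 : ℂ) ^ (∑ j ∈ Finset.Iio i, (w j).charge)) •
        ((-1 : ℂ) ^ (w i).delIdx k) •
          Finsupp.lsingle (Function.update w i ((w i).delete k))
    else 0

namespace SIM

theorem seq_injective (v : SIM) : Function.Injective v.seq :=
  v.strictAnti.injective

theorem ext_of_range_eq {v w : SIM} (h : Set.range v.seq = Set.range w.seq) : v = w := by
  have key : ∀ n, v.seq n = w.seq n := by
    intro n
    induction n using Nat.strong_induction_on with
    | _ n ih =>
      have h1 : ∃ p, w.seq p = v.seq n := by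
        have : v.seq n ∈ Set.range w.seq := h ▸ Set.mem_range_self n
        exact this
      have h2 : ∃ p, v.seq p = w.seq n := by
        have : w.seq n ∈ Set.range v.seq := h ▸ Set.mem_range_self n
        exact this
      obtain ⟨p, hp⟩ := h1
      obtain ⟨q, hq⟩ := h2
      have hpn : n ≤ p := by
        by_contra hc
        push_neg at hc
        have := ih p hc
        exact absurd (v.seq_injective (this.trans hp)) (by omega)
      have hqn : n ≤ q := by
        by_contra hc
        push_neg at hc
        have := ih q hc
        exact absurd (w.seq_injective (this.symm.trans hq).symm) (by omega)
      have l1 : v.seq n ≤ w.seq n := hp ▸ (w.strictAnti.antitone hpn)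
      have l2 : w.seq n ≤ v.seq n := hq ▸ (v.strictAnti.antitone hqn)
      omega
  cases v; cases w
  simp only [mk.injEq]
  exact funext key

theorem seq_insIdx_lt (v : SIM) (k : ℤ) : v.seq (v.insIdx k) < k :=
  Nat.sInf_mem (v.exists_seq_lt k)

theorem lt_seq_of_lt_insIdx {v : SIM} {k : ℤ} (hk : k ∉ Set.range v.seq) {n : ℕ}
    (hn : n < v.insIdx k) : k < v.seq n := by
  have h1 : ¬ v.seq n < k := Nat.notMem_of_lt_sInf hn
  have h2 : v.seq n ≠ k := fun hh => hk ⟨n, hh⟩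
  omega

theorem insIdx_eq {v : SIM} {k : ℤ} (hk : k ∉ Set.range v.seq) {s : ℕ}
    (hs : v.seq s < k) (hlt : ∀ n < s, k < v.seq n) : v.insIdx k = s := by
  have h1 : v.insIdx k ≤ s := Nat.sInf_le hs
  rcases eq_or_lt_of_le h1 with h | h
  · exact h
  · exact absurd (v.seq_insIdx_lt k) (by have := hlt _ h; omega)

theorem seq_delIdx {v : SIM} {k : ℤ} (hk : k ∈ Set.range v.seq) :
    v.seq (v.delIdx k) = k := by
  obtain ⟨s, hs⟩ := hk
  have hmem : s ∈ {n : ℕ | v.seq n ≤ k} := by simp [hs]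
  have h1 : v.delIdx k ≤ s := Nat.sInf_le hmem
  have h2 : v.seq (v.delIdx k) ≤ k := Nat.sInf_mem ⟨s, hmem⟩
  rcases eq_or_lt_of_le h1 with h | h
  · rw [h, hs]
  · exact absurd (v.strictAnti h) (by omega)

theorem delIdx_eq {v : SIM} {k : ℤ} {s : ℕ} (hs : v.seq s = k) : v.delIdx k = s := by
  have hk : k ∈ Set.range v.seq := ⟨s, hs⟩
  exact v.seq_injective (by rw [seq_delIdx hk, hs])

theorem insert_seq {v : SIM} {k : ℤ} (hk : k ∉ Set.range v.seq) (n : ℕ) :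
    (v.insert k).seq n =
      if n < v.insIdx k then v.seq n else if n = v.insIdx k then k else v.seq (n - 1) := by
  simp [SIM.insert, hk]

theorem delete_seq (v : SIM) (k : ℤ) (n : ℕ) :
    (v.delete k).seq n = if n < v.delIdx k then v.seq n else v.seq (n + 1) := rfl

theorem range_insert {v : SIM} {k : ℤ} (hk : k ∉ Set.range v.seq) :
    Set.range (v.insert k).seq = Insert.insert k (Set.range v.seq) := by
  ext x
  simp only [Set.mem_range, Set.mem_insert_iff]
  constructor
  · rintro ⟨n, hn⟩
    rw [insert_seq hk] at hn
    split_ifs at hn with h1 h2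
    · exact Or.inr ⟨n, hn⟩
    · exact Or.inl hn.symm
    · exact Or.inr ⟨n - 1, hn⟩
  · rintro (hx | ⟨n, hn⟩)
    · refine ⟨v.insIdx k, ?_⟩
      rw [insert_seq hk, if_neg (lt_irrefl _), if_pos rfl]
      exact hx.symm
    · rcases lt_or_ge n (v.insIdx k) with h | h
      · refine ⟨n, ?_⟩
        rw [insert_seq hk, if_pos h]
        exact hn
      · refine ⟨n + 1, ?_⟩
        rw [insert_seq hk, if_neg (by omega), if_neg (by omega)]
        simpa

theorem range_delete {v : SIM} {k : ℤ} (hk : k ∈ Set.range v.seq) :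
    Set.range (v.delete k).seq = Set.range v.seq \ {k} := by
  ext x
  simp only [Set.mem_range, Set.mem_diff, Set.mem_singleton_iff]
  constructor
  · rintro ⟨n, hn⟩
    rw [delete_seq] at hn
    split_ifs at hn with h1
    · refine ⟨⟨n, hn⟩, ?_⟩
      rintro rfl
      have := delIdx_eq hn
      omega
    · refine ⟨⟨n + 1, hn⟩, ?_⟩
      rintro rfl
      have := delIdx_eq hn
      omega
  · rintro ⟨⟨n, hn⟩, hx⟩
    have hne : n ≠ v.delIdx k := fun h => hx (by rw [← hn, h, seq_delIdx hk])
    rcases lt_or_ge n (v.delIdx k) with h | h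
    · refine ⟨n, ?_⟩
      rw [delete_seq, if_pos h]
      exact hn
    · have hgt : v.delIdx k < n := lt_of_le_of_ne h (Ne.symm hne)
      refine ⟨n - 1, ?_⟩
      rw [delete_seq, if_neg (by omega), show n - 1 + 1 = n by omega]
      exact hn

end SIM
namespace SIM

theorem hasCharge_charge (v : SIM) : v.HasCharge v.charge := v.charge_exists.choose_spec

theorem charge_unique {v : SIM} {m : ℤ} (h : v.HasCharge m) : v.charge = m := by
  obtain ⟨N1, h1⟩ := v.hasCharge_charge
  obtain ⟨N2, h2⟩ := h
  have e1 := h1 (max N1 N2) (le_max_left _ _)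
  have e2 := h2 (max N1 N2) (le_max_right _ _)
  omega

theorem charge_insert {v : SIM} {k : ℤ} (hk : k ∉ Set.range v.seq) :
    (v.insert k).charge = v.charge + 1 := by
  apply charge_unique
  obtain ⟨N, hN⟩ := v.hasCharge_charge
  refine ⟨max (N + 1) (v.insIdx k + 1), fun n hn => ?_⟩
  rw [insert_seq hk, if_neg (by omega), if_neg (by omega), hN (n - 1) (by omega)]
  omega

theorem charge_delete {v : SIM} (k : ℤ) :
    (v.delete k).charge = v.charge - 1 := by
  apply charge_unique
  obtain ⟨N, hN⟩ := v.hasCharge_charge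
  refine ⟨max N (v.delIdx k), fun n hn => ?_⟩
  rw [delete_seq, if_neg (by omega), hN (n + 1) (by omega)]
  omega

theorem mem_range_insert {v : SIM} {k l : ℤ} (hk : k ∉ Set.range v.seq) :
    l ∈ Set.range (v.insert k).seq ↔ l = k ∨ l ∈ Set.range v.seq := by
  rw [range_insert hk]; simp

theorem mem_range_delete {v : SIM} {k l : ℤ} (hk : k ∈ Set.range v.seq) :
    l ∈ Set.range (v.delete k).seq ↔ l ∈ Set.range v.seq ∧ l ≠ k := by
  rw [range_delete hk]; simp

theorem insert_comm' {v : SIM} {k l : ℤ} (hk : k ∉ Set.range v.seq)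
    (hl : l ∉ Set.range v.seq) (hkl : k ≠ l) :
    (v.insert k).insert l = (v.insert l).insert k := by
  have h1 : l ∉ Set.range (v.insert k).seq := by
    rw [mem_range_insert hk]; tauto
  have h2 : k ∉ Set.range (v.insert l).seq := by
    rw [mem_range_insert hl]; tauto
  apply ext_of_range_eq
  rw [range_insert h1, range_insert hk, range_insert h2, range_insert hl]
  exact Set.insert_comm _ _ _

theorem delete_comm' {v : SIM} {k l : ℤ} (hk : k ∈ Set.range v.seq)
    (hl : l ∈ Set.range v.seq) (hkl : k ≠ l) :
    (v.delete k).delete l = (v.delete l).delete k := by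
  have h1 : l ∈ Set.range (v.delete k).seq := by
    rw [mem_range_delete hk]; exact ⟨hl, Ne.symm hkl⟩
  have h2 : k ∈ Set.range (v.delete l).seq := by
    rw [mem_range_delete hl]; exact ⟨hk, hkl⟩
  apply ext_of_range_eq
  rw [range_delete h1, range_delete hk, range_delete h2, range_delete hl]
  rw [Set.diff_diff_comm]

theorem insert_delete {v : SIM} {k l : ℤ} (hk : k ∉ Set.range v.seq)
    (hl : l ∈ Set.range v.seq) (hkl : k ≠ l) :
    (v.delete l).insert k = (v.insert k).delete l := by
  have h1 : k ∉ Set.range (v.delete l).seq := by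
    rw [mem_range_delete hl]; tauto
  have h2 : l ∈ Set.range (v.insert k).seq := by
    rw [mem_range_insert hk]; tauto
  apply ext_of_range_eq
  rw [range_insert h1, range_delete h2, range_delete hl, range_insert hk]
  ext x
  simp only [Set.mem_insert_iff, Set.mem_diff, Set.mem_singleton_iff]
  constructor
  · rintro (rfl | ⟨hx, hne⟩)
    · exact ⟨Or.inl rfl, hkl⟩
    · exact ⟨Or.inr hx, hne⟩
  · rintro ⟨(rfl | hx), hne⟩
    · exact Or.inl rfl
    · exact Or.inr ⟨hx, hne⟩

theorem delete_insert_self {v : SIM} {k : ℤ} (hk : k ∉ Set.range v.seq) :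
    (v.insert k).delete k = v := by
  have h2 : k ∈ Set.range (v.insert k).seq := by
    rw [mem_range_insert hk]; tauto
  apply ext_of_range_eq
  rw [range_delete h2, range_insert hk]
  simp [Set.insert_diff_of_mem, hk]

theorem insert_delete_self {v : SIM} {k : ℤ} (hk : k ∈ Set.range v.seq) :
    (v.delete k).insert k = v := by
  have h1 : k ∉ Set.range (v.delete k).seq := by
    rw [mem_range_delete hk]; tauto
  apply ext_of_range_eq
  rw [range_insert h1, range_delete hk]
  exact Set.insert_diff_singleton.trans (Set.insert_eq_self.mpr hk)

/-! ### Index shift lemmas -/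

theorem not_mem_range_insert {v : SIM} {k l : ℤ} (hk : k ∉ Set.range v.seq)
    (hl : l ∉ Set.range v.seq) (hkl : k ≠ l) : k ∉ Set.range (v.insert l).seq := by
  rw [mem_range_insert hl]
  push_neg
  exact ⟨hkl, hk⟩

theorem not_mem_range_delete {v : SIM} {k l : ℤ} (hk : k ∉ Set.range v.seq)
    (hl : l ∈ Set.range v.seq) : k ∉ Set.range (v.delete l).seq := by
  rw [mem_range_delete hl]
  tauto

-- A
theorem insIdx_insert_gt {v : SIM} {k l : ℤ} (hk : k ∉ Set.range v.seq)
    (hl : l ∉ Set.range v.seq) (hkl : k < l) :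
    (v.insert l).insIdx k = v.insIdx k + 1 := by
  have hk' : k ∉ Set.range (v.insert l).seq := not_mem_range_insert hk hl (by omega)
  have hts : v.insIdx l ≤ v.insIdx k := by
    by_contra hc
    push_neg at hc
    have h1 := lt_seq_of_lt_insIdx hl hc
    have h2 := v.seq_insIdx_lt k
    omega
  apply insIdx_eq hk'
  · rw [insert_seq hl, if_neg (by omega), if_neg (by omega)]
    simpa using v.seq_insIdx_lt k
  · intro n hn
    rw [insert_seq hl]
    split_ifs with h1 h2
    · have hns : n < v.insIdx k := by
        rcases lt_or_eq_of_le (Nat.le_of_lt_succ hn) with h | h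
        · exact h
        · omega
      exact lt_seq_of_lt_insIdx hk hns
    · omega
    · exact lt_seq_of_lt_insIdx hk (by omega)

-- B
theorem insIdx_insert_lt {v : SIM} {k l : ℤ} (hk : k ∉ Set.range v.seq)
    (hl : l ∉ Set.range v.seq) (hkl : l < k) :
    (v.insert l).insIdx k = v.insIdx k := by
  have hk' : k ∉ Set.range (v.insert l).seq := not_mem_range_insert hk hl (by omega)
  have hst : v.insIdx k ≤ v.insIdx l := Nat.sInf_le (by
    have := v.seq_insIdx_lt l
    show v.seq (v.insIdx l) < k
    omega)
  apply insIdx_eq hk'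
  · rw [insert_seq hl]
    rcases lt_or_eq_of_le hst with h | h
    · rw [if_pos h]
      exact v.seq_insIdx_lt k
    · rw [if_neg (by omega), if_pos h]
      exact hkl
  · intro n hn
    rw [insert_seq hl, if_pos (by omega)]
    exact lt_seq_of_lt_insIdx hk hn

-- C
theorem delIdx_insert_self {v : SIM} {k : ℤ} (hk : k ∉ Set.range v.seq) :
    (v.insert k).delIdx k = v.insIdx k := by
  apply delIdx_eq
  rw [insert_seq hk, if_neg (lt_irrefl _), if_pos rfl]

-- D
theorem insIdx_delete_self {v : SIM} {k : ℤ} (hk : k ∈ Set.range v.seq) :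
    (v.delete k).insIdx k = v.delIdx k := by
  have hk' : k ∉ Set.range (v.delete k).seq := by
    rw [mem_range_delete hk]; tauto
  apply insIdx_eq hk'
  · rw [delete_seq, if_neg (lt_irrefl _)]
    have h3 : v.seq (v.delIdx k + 1) < v.seq (v.delIdx k) := v.strictAnti (by omega)
    rw [seq_delIdx hk] at h3
    exact h3
  · intro n hn
    rw [delete_seq, if_pos hn]
    have := v.strictAnti hn
    rw [seq_delIdx hk] at this
    exact this

-- E
theorem insIdx_delete_gt {v : SIM} {k l : ℤ} (hk : k ∉ Set.range v.seq)
    (hl : l ∈ Set.range v.seq) (hkl : k < l) :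
    v.insIdx k = (v.delete l).insIdx k + 1 := by
  have hk' : k ∉ Set.range (v.delete l).seq := not_mem_range_delete hk hl
  have hu : v.delIdx l < v.insIdx k := by
    by_contra hc
    push_neg at hc
    have h1 : v.seq (v.delIdx l) ≤ v.seq (v.insIdx k) := v.strictAnti.antitone hc
    have h2 := v.seq_insIdx_lt k
    rw [seq_delIdx hl] at h1
    omega
  have key : (v.delete l).insIdx k = v.insIdx k - 1 := by
    apply insIdx_eq hk'
    · rw [delete_seq, if_neg (by omega), show v.insIdx k - 1 + 1 = v.insIdx k by omega]
      exact v.seq_insIdx_lt k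
    · intro n hn
      rw [delete_seq]
      split_ifs with h1
      · exact lt_seq_of_lt_insIdx hk (by omega)
      · exact lt_seq_of_lt_insIdx hk (by omega)
  omega

-- F
theorem insIdx_delete_lt {v : SIM} {k l : ℤ} (hk : k ∉ Set.range v.seq)
    (hl : l ∈ Set.range v.seq) (hkl : l < k) :
    (v.delete l).insIdx k = v.insIdx k := by
  have hk' : k ∉ Set.range (v.delete l).seq := not_mem_range_delete hk hl
  have hu : v.insIdx k ≤ v.delIdx l := by
    by_contra hc
    push_neg at hc
    have h1 := lt_seq_of_lt_insIdx hk hc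
    rw [seq_delIdx hl] at h1
    omega
  apply insIdx_eq hk'
  · rw [delete_seq]
    have h2 := v.seq_insIdx_lt k
    split_ifs with h1
    · exact h2
    · have h3 : v.seq (v.insIdx k + 1) < v.seq (v.insIdx k) := v.strictAnti (by omega)
      omega
  · intro n hn
    rw [delete_seq, if_pos (by omega)]
    exact lt_seq_of_lt_insIdx hk hn

-- G
theorem delIdx_insert_lt {v : SIM} {k l : ℤ} (hk : k ∉ Set.range v.seq)
    (hl : l ∈ Set.range v.seq) (hkl : l < k) :
    (v.insert k).delIdx l = v.delIdx l + 1 := by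
  have hu : v.insIdx k ≤ v.delIdx l := by
    by_contra hc
    push_neg at hc
    have h1 := lt_seq_of_lt_insIdx hk hc
    rw [seq_delIdx hl] at h1
    omega
  apply delIdx_eq
  rw [insert_seq hk, if_neg (by omega), if_neg (by omega)]
  simpa using seq_delIdx hl

-- H
theorem delIdx_insert_gt {v : SIM} {k l : ℤ} (hk : k ∉ Set.range v.seq)
    (hl : l ∈ Set.range v.seq) (hkl : k < l) :
    (v.insert k).delIdx l = v.delIdx l := by
  have hu : v.delIdx l < v.insIdx k := by
    by_contra hc
    push_neg at hc
    have h1 : v.seq (v.delIdx l) ≤ v.seq (v.insIdx k) := v.strictAnti.antitone hc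
    have h2 := v.seq_insIdx_lt k
    rw [seq_delIdx hl] at h1
    omega
  apply delIdx_eq
  rw [insert_seq hk, if_pos hu]
  exact seq_delIdx hl

-- I
theorem delIdx_delete_gt {v : SIM} {k l : ℤ} (hk : k ∈ Set.range v.seq)
    (hl : l ∈ Set.range v.seq) (hkl : k < l) :
    v.delIdx k = (v.delete l).delIdx k + 1 := by
  have hu : v.delIdx l < v.delIdx k := by
    have h1 := seq_delIdx hk
    have h2 := seq_delIdx hl
    by_contra hc
    push_neg at hc
    have := v.strictAnti.antitone hc
    omega
  have key : (v.delete l).delIdx k = v.delIdx k - 1 := by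
    apply delIdx_eq
    rw [delete_seq, if_neg (by omega), show v.delIdx k - 1 + 1 = v.delIdx k by omega]
    exact seq_delIdx hk
  omega

-- J
theorem delIdx_delete_lt {v : SIM} {k l : ℤ} (hk : k ∈ Set.range v.seq)
    (hl : l ∈ Set.range v.seq) (hkl : l < k) :
    (v.delete l).delIdx k = v.delIdx k := by
  have hu : v.delIdx k < v.delIdx l := by
    have h1 := seq_delIdx hk
    have h2 := seq_delIdx hl
    by_contra hc
    push_neg at hc
    have := v.strictAnti.antitone hc
    omega
  apply delIdx_eq
  rw [delete_seq, if_pos hu]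
  exact seq_delIdx hk

end SIM
/-! ### Operator-level helpers -/

theorem neg_one_zpow_sq (m : ℤ) : ((-1 : ℂ) ^ m) * ((-1 : ℂ) ^ m) = 1 := by
  rw [← zpow_add₀ (by norm_num : (-1 : ℂ) ≠ 0), show m + m = 2 * m by ring, zpow_mul]
  norm_num

theorem neg_one_pow_sq' (a : ℕ) : ((-1 : ℂ) ^ a) * ((-1 : ℂ) ^ a) = 1 := by
  rw [← pow_add]
  exact Even.neg_one_pow ⟨a, rfl⟩

theorem neg_one_zpow_succ (m : ℤ) : ((-1 : ℂ) ^ (m + 1)) = -(-1 : ℂ) ^ m := by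
  rw [zpow_add₀ (by norm_num : (-1 : ℂ) ≠ 0), zpow_one, mul_neg_one]

theorem neg_one_zpow_pred (m : ℤ) : ((-1 : ℂ) ^ (m - 1)) = -(-1 : ℂ) ^ m := by
  have h := neg_one_zpow_succ (m - 1)
  rw [sub_add_cancel] at h
  rw [h, neg_neg]

theorem sum_Iio_update_self {r : ℕ} (w : Fin r → SIM) (i : Fin r) (x : SIM) :
    ∑ t ∈ Finset.Iio i, ((Function.update w i x) t).charge =
      ∑ t ∈ Finset.Iio i, (w t).charge :=
  Finset.sum_congr rfl fun t ht =>
    by rw [Function.update_of_ne (ne_of_lt (Finset.mem_Iio.mp ht))]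

theorem sum_Iio_update_of_lt {r : ℕ} (w : Fin r → SIM) {i j : Fin r} (x : SIM)
    (h : j < i) :
    ∑ t ∈ Finset.Iio i, ((Function.update w j x) t).charge =
      (∑ t ∈ Finset.Iio i, (w t).charge) + (x.charge - (w j).charge) := by
  have e : ∀ t, ((Function.update w j x) t).charge =
      Function.update (fun t => (w t).charge) j x.charge t := by
    intro t
    rcases eq_or_ne t j with rfl | ht
    · simp
    · simp [Function.update_of_ne ht]
  rw [Finset.sum_congr rfl fun t _ => e t,
    Finset.sum_update_of_mem (Finset.mem_Iio.mpr h),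
    Finset.sum_eq_add_sum_sdiff_singleton_of_mem (Finset.mem_Iio.mpr h) (fun t => (w t).charge)]
  ring

theorem sum_Iio_update_of_not_lt {r : ℕ} (w : Fin r → SIM) {i j : Fin r} (x : SIM)
    (h : ¬ j < i) :
    ∑ t ∈ Finset.Iio i, ((Function.update w j x) t).charge =
      ∑ t ∈ Finset.Iio i, (w t).charge :=
  Finset.sum_congr rfl fun t ht => by
    rw [Function.update_of_ne (by
      have := Finset.mem_Iio.mp ht
      intro hh
      exact h (lt_of_le_of_lt (le_of_eq hh.symm) this))]

theorem psiC_single {r : ℕ} (i : Fin r) (k : ℤ) (w : Fin r → SIM) (c : ℂ) :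
    psiC r i k (Finsupp.single w c) =
      if k ∈ Set.range (w i).seq then 0
      else ((-1 : ℂ) ^ (∑ j ∈ Finset.Iio i, (w j).charge) * (-1 : ℂ) ^ (w i).insIdx k) •
        Finsupp.single (Function.update w i ((w i).insert k)) c := by
  rw [psiC, Finsupp.lsum_single]
  split_ifs with h
  · rfl
  · simp [smul_smul]

theorem psiStarC_single {r : ℕ} (i : Fin r) (k : ℤ) (w : Fin r → SIM) (c : ℂ) :
    psiStarC r i k (Finsupp.single w c) =
      if k ∈ Set.range (w i).seq then
        ((-1 : ℂ) ^ (∑ j ∈ Finset.Iio i, (w j).charge) * (-1 : ℂ) ^ (w i).delIdx k) •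
          Finsupp.single (Function.update w i ((w i).delete k)) c
      else 0 := by
  rw [psiStarC, Finsupp.lsum_single]
  split_ifs with h
  · simp [smul_smul]
  · rfl
theorem cancel_smul {M : Type*} [AddCommGroup M] [Module ℂ M] {s t : ℂ} {x y : M}
    (hxy : x = y) (h : s + t = 0) : s • x + t • y = 0 := by
  rw [hxy, ← add_smul, h, zero_smul]

theorem wedge_wedge {r : ℕ} (i j : Fin r) (k l : ℤ) :
    psiC r i k ∘ₗ psiC r j l + psiC r j l ∘ₗ psiC r i k = 0 := by
  apply Finsupp.lhom_ext
  intro w c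
  simp only [LinearMap.add_apply, LinearMap.comp_apply, LinearMap.zero_apply]
  rw [psiC_single j l w c, psiC_single i k w c]
  rcases eq_or_ne i j with rfl | hij
  · -- same color
    by_cases hl : l ∈ Set.range (w i).seq
    · rw [if_pos hl]
      by_cases hk : k ∈ Set.range (w i).seq
      · rw [if_pos hk]; simp
      · rw [if_neg hk, map_zero, map_smul, psiC_single]
        rw [if_pos (by
          rw [Function.update_self, SIM.mem_range_insert hk]
          exact Or.inr hl)]
        simp
    · rw [if_neg hl]
      by_cases hk : k ∈ Set.range (w i).seq
      · rw [if_pos hk, map_zero, map_smul, psiC_single]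
        rw [if_pos (by
          rw [Function.update_self, SIM.mem_range_insert hl]
          exact Or.inr hk)]
        simp
      · rw [if_neg hk, map_smul, map_smul, psiC_single, psiC_single]
        by_cases hkl : k = l
        · subst hkl
          rw [if_pos (by
            rw [Function.update_self, SIM.mem_range_insert hk]
            exact Or.inl rfl)]
          simp
        · rw [if_neg (by
            rw [Function.update_self]
            exact SIM.not_mem_range_insert hk hl hkl)]
          rw [if_neg (by
            rw [Function.update_self]
            exact SIM.not_mem_range_insert hl hk (Ne.symm hkl))]
          simp only [Function.update_self, Function.update_idem, sum_Iio_update_self,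
            smul_smul]
          apply cancel_smul
          · rw [SIM.insert_comm' hk hl hkl]
          · rcases lt_or_gt_of_ne hkl with h | h
            · rw [SIM.insIdx_insert_gt hk hl h, SIM.insIdx_insert_lt hl hk h, pow_succ]
              ring
            · rw [SIM.insIdx_insert_lt hk hl h, SIM.insIdx_insert_gt hl hk h, pow_succ]
              ring
  · -- different colors
    have hji : j ≠ i := hij.symm
    by_cases hl : l ∈ Set.range (w j).seq
    · rw [if_pos hl]
      by_cases hk : k ∈ Set.range (w i).seq
      · rw [if_pos hk]; simp
      · rw [if_neg hk, map_zero, map_smul, psiC_single]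
        rw [if_pos (by rw [Function.update_of_ne hji]; exact hl)]
        simp
    · rw [if_neg hl]
      by_cases hk : k ∈ Set.range (w i).seq
      · rw [if_pos hk, map_zero, map_smul, psiC_single]
        rw [if_pos (by rw [Function.update_of_ne hij]; exact hk)]
        simp
      · rw [if_neg hk, map_smul, map_smul, psiC_single, psiC_single]
        rw [if_neg (by rw [Function.update_of_ne hij]; exact hk)]
        rw [if_neg (by rw [Function.update_of_ne hji]; exact hl)]
        simp only [Function.update_of_ne hij, Function.update_of_ne hji, smul_smul]
        apply cancel_smul
        · rw [Function.update_comm hij]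
        · rcases hij.lt_or_gt with h | h
          · -- i < j
            rw [sum_Iio_update_of_not_lt w _ (by simp [h.asymm]),
              sum_Iio_update_of_lt w _ h, SIM.charge_insert hk]
            rw [show (∑ t ∈ Finset.Iio j, (w t).charge) + ((w i).charge + 1 - (w i).charge)
              = (∑ t ∈ Finset.Iio j, (w t).charge) + 1 by ring, neg_one_zpow_succ]
            ring
          · -- j < i
            rw [sum_Iio_update_of_lt w _ h, sum_Iio_update_of_not_lt w _ (by simp [h.asymm]),
              SIM.charge_insert hl]
            rw [show (∑ t ∈ Finset.Iio i, (w t).charge) + ((w j).charge + 1 - (w j).charge)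
              = (∑ t ∈ Finset.Iio i, (w t).charge) + 1 by ring, neg_one_zpow_succ]
            ring
theorem psiStarC_anticomm {r : ℕ} (i j : Fin r) (k l : ℤ) :
    psiStarC r i k ∘ₗ psiStarC r j l + psiStarC r j l ∘ₗ psiStarC r i k = 0 := by
  apply Finsupp.lhom_ext
  intro w c
  simp only [LinearMap.add_apply, LinearMap.comp_apply, LinearMap.zero_apply]
  rw [psiStarC_single j l w c, psiStarC_single i k w c]
  rcases eq_or_ne i j with rfl | hij
  · -- same color
    by_cases hl : l ∈ Set.range (w i).seq
    · rw [if_pos hl]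
      by_cases hk : k ∈ Set.range (w i).seq
      · rw [if_pos hk, map_smul, map_smul, psiStarC_single, psiStarC_single]
        by_cases hkl : k = l
        · subst hkl
          rw [if_neg (by
            rw [Function.update_self, SIM.mem_range_delete hk]
            tauto)]
          simp
        · rw [if_pos (by
            rw [Function.update_self, SIM.mem_range_delete hl]
            exact ⟨hk, hkl⟩)]
          rw [if_pos (by
            rw [Function.update_self, SIM.mem_range_delete hk]
            exact ⟨hl, Ne.symm hkl⟩)]
          simp only [Function.update_self, Function.update_idem, sum_Iio_update_self,
            smul_smul]
          apply cancel_smul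
          · rw [SIM.delete_comm' hl hk (Ne.symm hkl)]
          · rcases lt_or_gt_of_ne hkl with h | h
            · rw [SIM.delIdx_delete_gt hk hl h, SIM.delIdx_delete_lt hl hk h, pow_succ]
              ring
            · rw [SIM.delIdx_delete_lt hk hl h, SIM.delIdx_delete_gt hl hk h, pow_succ]
              ring
      · rw [if_neg hk, map_zero, map_smul, psiStarC_single]
        rw [if_neg (by
          rw [Function.update_self, SIM.mem_range_delete hl]
          tauto)]
        simp
    · rw [if_neg hl]
      by_cases hk : k ∈ Set.range (w i).seq
      · rw [if_pos hk, map_zero, map_smul, psiStarC_single]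
        rw [if_neg (by
          rw [Function.update_self, SIM.mem_range_delete hk]
          tauto)]
        simp
      · rw [if_neg hk]; simp
  · -- different colors
    have hji : j ≠ i := hij.symm
    by_cases hl : l ∈ Set.range (w j).seq
    · rw [if_pos hl]
      by_cases hk : k ∈ Set.range (w i).seq
      · rw [if_pos hk, map_smul, map_smul, psiStarC_single, psiStarC_single]
        rw [if_pos (by rw [Function.update_of_ne hij]; exact hk)]
        rw [if_pos (by rw [Function.update_of_ne hji]; exact hl)]
        simp only [Function.update_of_ne hij, Function.update_of_ne hji, smul_smul]
        apply cancel_smul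
        · rw [Function.update_comm hij]
        · rcases hij.lt_or_gt with h | h
          · rw [sum_Iio_update_of_not_lt w _ (by simp [h.asymm]),
              sum_Iio_update_of_lt w _ h, SIM.charge_delete]
            rw [show (∑ t ∈ Finset.Iio j, (w t).charge) + ((w i).charge - 1 - (w i).charge)
              = (∑ t ∈ Finset.Iio j, (w t).charge) - 1 by ring, neg_one_zpow_pred]
            ring
          · rw [sum_Iio_update_of_lt w _ h, sum_Iio_update_of_not_lt w _ (by simp [h.asymm]),
              SIM.charge_delete]
            rw [show (∑ t ∈ Finset.Iio i, (w t).charge) + ((w j).charge - 1 - (w j).charge)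
              = (∑ t ∈ Finset.Iio i, (w t).charge) - 1 by ring, neg_one_zpow_pred]
            ring
      · rw [if_neg hk, map_zero, map_smul, psiStarC_single]
        rw [if_neg (by rw [Function.update_of_ne hij]; exact hk)]
        simp
    · rw [if_neg hl]
      by_cases hk : k ∈ Set.range (w i).seq
      · rw [if_pos hk, map_zero, map_smul, psiStarC_single]
        rw [if_neg (by rw [Function.update_of_ne hji]; exact hl)]
        simp
      · rw [if_neg hk]; simp
theorem wedge_star {r : ℕ} (i j : Fin r) (k l : ℤ) :
    psiC r i k ∘ₗ psiStarC r j l + psiStarC r j l ∘ₗ psiC r i k =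
      if i = j ∧ k = l then (LinearMap.id : FockR r →ₗ[ℂ] FockR r) else 0 := by
  apply Finsupp.lhom_ext
  intro w c
  simp only [LinearMap.add_apply, LinearMap.comp_apply]
  rw [psiStarC_single j l w c, psiC_single i k w c]
  rcases eq_or_ne i j with rfl | hij
  · by_cases hkl : k = l
    · subst hkl
      rw [if_pos (show i = i ∧ k = k from ⟨rfl, rfl⟩)]
      simp only [LinearMap.id_apply]
      by_cases hk : k ∈ Set.range (w i).seq
      · rw [if_pos hk]
        rw [if_pos hk, map_zero, map_smul, add_zero, psiC_single]
        rw [if_neg (by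
          rw [Function.update_self, SIM.mem_range_delete hk]
          tauto)]
        simp only [Function.update_self, Function.update_idem, sum_Iio_update_self,
          SIM.insIdx_delete_self hk, SIM.insert_delete_self hk, Function.update_eq_self,
          smul_smul]
        rw [show ((-1 : ℂ) ^ (∑ t ∈ Finset.Iio i, (w t).charge) * (-1 : ℂ) ^ (w i).delIdx k) *
            ((-1 : ℂ) ^ (∑ t ∈ Finset.Iio i, (w t).charge) * (-1 : ℂ) ^ (w i).delIdx k) =
            ((-1 : ℂ) ^ (∑ t ∈ Finset.Iio i, (w t).charge) *
              (-1 : ℂ) ^ (∑ t ∈ Finset.Iio i, (w t).charge)) *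
            ((-1 : ℂ) ^ (w i).delIdx k * (-1 : ℂ) ^ (w i).delIdx k) by ring,
          neg_one_zpow_sq, neg_one_pow_sq', one_mul, one_smul]
      · rw [if_neg hk]
        rw [if_neg hk, map_zero, map_smul, zero_add, psiStarC_single]
        rw [if_pos (by
          rw [Function.update_self, SIM.mem_range_insert hk]
          exact Or.inl rfl)]
        simp only [Function.update_self, Function.update_idem, sum_Iio_update_self,
          SIM.delIdx_insert_self hk, SIM.delete_insert_self hk, Function.update_eq_self,
          smul_smul]
        rw [show ((-1 : ℂ) ^ (∑ t ∈ Finset.Iio i, (w t).charge) * (-1 : ℂ) ^ (w i).insIdx k) *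
            ((-1 : ℂ) ^ (∑ t ∈ Finset.Iio i, (w t).charge) * (-1 : ℂ) ^ (w i).insIdx k) =
            ((-1 : ℂ) ^ (∑ t ∈ Finset.Iio i, (w t).charge) *
              (-1 : ℂ) ^ (∑ t ∈ Finset.Iio i, (w t).charge)) *
            ((-1 : ℂ) ^ (w i).insIdx k * (-1 : ℂ) ^ (w i).insIdx k) by ring,
          neg_one_zpow_sq, neg_one_pow_sq', one_mul, one_smul]
    · rw [if_neg (show ¬(i = i ∧ k = l) from fun h => hkl h.2)]
      simp only [LinearMap.zero_apply]
      by_cases hl : l ∈ Set.range (w i).seq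
      · rw [if_pos hl]
        by_cases hk : k ∈ Set.range (w i).seq
        · rw [if_pos hk]
          rw [map_zero, map_smul, add_zero, psiC_single]
          rw [if_pos (by
            rw [Function.update_self, SIM.mem_range_delete hl]
            exact ⟨hk, hkl⟩)]
          simp
        · rw [if_neg hk, map_smul, map_smul, psiC_single, psiStarC_single]
          rw [if_neg (by
            rw [Function.update_self]
            exact SIM.not_mem_range_delete hk hl)]
          rw [if_pos (by
            rw [Function.update_self, SIM.mem_range_insert hk]
            exact Or.inr hl)]
          simp only [Function.update_self, Function.update_idem, sum_Iio_update_self,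
            smul_smul]
          apply cancel_smul
          · rw [SIM.insert_delete hk hl hkl]
          · rcases lt_or_gt_of_ne hkl with h | h
            · rw [SIM.insIdx_delete_gt hk hl h, SIM.delIdx_insert_gt hk hl h, pow_succ]
              ring
            · rw [SIM.insIdx_delete_lt hk hl h, SIM.delIdx_insert_lt hk hl h, pow_succ]
              ring
      · rw [if_neg hl, map_zero, zero_add]
        by_cases hk : k ∈ Set.range (w i).seq
        · rw [if_pos hk, map_zero]
        · rw [if_neg hk, map_smul, psiStarC_single]
          rw [if_neg (by
            rw [Function.update_self]
            exact SIM.not_mem_range_insert hl hk (Ne.symm hkl))]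
          simp
  · rw [if_neg (show ¬(i = j ∧ k = l) from fun h => hij h.1)]
    simp only [LinearMap.zero_apply]
    have hji : j ≠ i := hij.symm
    by_cases hl : l ∈ Set.range (w j).seq
    · rw [if_pos hl]
      by_cases hk : k ∈ Set.range (w i).seq
      · rw [if_pos hk]
        rw [map_zero, map_smul, add_zero, psiC_single]
        rw [if_pos (by rw [Function.update_of_ne hij]; exact hk)]
        simp
      · rw [if_neg hk, map_smul, map_smul, psiC_single, psiStarC_single]
        rw [if_neg (by rw [Function.update_of_ne hij]; exact hk)]
        rw [if_pos (by rw [Function.update_of_ne hji]; exact hl)]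
        simp only [Function.update_of_ne hij, Function.update_of_ne hji, smul_smul]
        apply cancel_smul
        · rw [Function.update_comm hij]
        · rcases hij.lt_or_gt with h | h
          · rw [sum_Iio_update_of_not_lt w _ (by simp [h.asymm]),
              sum_Iio_update_of_lt w _ h, SIM.charge_insert hk]
            rw [show (∑ t ∈ Finset.Iio j, (w t).charge) + ((w i).charge + 1 - (w i).charge)
              = (∑ t ∈ Finset.Iio j, (w t).charge) + 1 by ring, neg_one_zpow_succ]
            ring
          · rw [sum_Iio_update_of_lt w _ h, sum_Iio_update_of_not_lt w _ (by simp [h.asymm]),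
              SIM.charge_delete]
            rw [show (∑ t ∈ Finset.Iio i, (w t).charge) + ((w j).charge - 1 - (w j).charge)
              = (∑ t ∈ Finset.Iio i, (w t).charge) - 1 by ring, neg_one_zpow_pred]
            ring
    · rw [if_neg hl, map_zero, zero_add]
      by_cases hk : k ∈ Set.range (w i).seq
      · rw [if_pos hk, map_zero]
      · rw [if_neg hk, map_smul, psiStarC_single]
        rw [if_neg (by rw [Function.update_of_ne hji]; exact hl)]
        simp
/-- The operators on the `r`-colored fermionic Fock space `𝓕^r` satisfy the
full `Cl^r` anti-commutation relations: for all colors `i, j` and integers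
`k, l`, `ψ_i(k)ψ_j(l) + ψ_j(l)ψ_i(k) = 0`,
`ψ*_i(k)ψ*_j(l) + ψ*_j(l)ψ*_i(k) = 0`, and
`ψ_i(k)ψ*_j(l) + ψ*_j(l)ψ_i(k) = δ_{i,j}δ_{k,l}·id`. -/
theorem colored_clifford_relations (r : ℕ) (i j : Fin r) (k l : ℤ) :
    psiC r i k ∘ₗ psiC r j l + psiC r j l ∘ₗ psiC r i k = 0 ∧
    psiStarC r i k ∘ₗ psiStarC r j l + psiStarC r j l ∘ₗ psiStarC r i k = 0 ∧
    psiC r i k ∘ₗ psiStarC r j l + psiStarC r j l ∘ₗ psiC r i k =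
      if i = j ∧ k = l then (LinearMap.id : FockR r →ₗ[ℂ] FockR r) else 0 := by
  exact ⟨wedge_wedge i j k l, psiStarC_anticomm i j k l, wedge_star i j k l⟩
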